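/- arXiv:0807.3690 — 2 statements merged into one kernel-verified Lean document; each statement's English description precedes it below -/
import Mathlib

section
/- Define φ_T(M₁, M₂, n) := ∑_{d} μ'(d) · ⌊((M₁ mod d) + (M₂ mod d))/d⌋, where the sum runs over squarefree products d > 1 of primes all ≤ n, and μ'(d) = (-1)^{ω(d)+1} (so singleton prime products count positively, pairs negatively, etc.). Then for every natural number n ≥ 1, π((n+1)²) - π(n²) = π(2n) - π(n) + 1 - φ_T(n², 2n, n), where π is the prime-counting function. -/
open ArithmeticFunction Nat Finset
open scoped ArithmeticFunction.Moebius

/-- Index set: squarefree `d > 1` all of whose prime factors are `≤ n`. -/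
def sqfSet (n : ℕ) : Finset ℕ :=
  (Finset.range (primorial n + 1)).filter
    (fun d => 1 < d ∧ Squarefree d ∧ ∀ p ∈ d.primeFactors, p ≤ n)

/-- The transformed Legendre function `φ_T`. -/
def phiT (M₁ M₂ n : ℕ) : ℤ :=
  -∑ d ∈ sqfSet n, ArithmeticFunction.moebius d * (((M₁ % d + M₂ % d) / d : ℕ) : ℤ)

lemma dvd_primorial_iff {n d : ℕ} (hd : d ≠ 0) :
    d ∣ primorial n ↔ Squarefree d ∧ ∀ p ∈ d.primeFactors, p ≤ n := by
  constructor
  · intro h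
    refine ⟨(squarefree_primorial n).squarefree_of_dvd h, fun p hp => ?_⟩
    have hpp : p.Prime := Nat.prime_of_mem_primeFactors hp
    have hpd : p ∣ primorial n := (Nat.dvd_of_mem_primeFactors hp).trans h
    rw [primorial] at hpd
    obtain ⟨q, hq, hpq⟩ := (hpp.prime.dvd_finset_prod_iff _).mp hpd
    obtain ⟨hq1, hq2⟩ := Finset.mem_filter.mp hq
    have := (Nat.prime_dvd_prime_iff_eq hpp hq2).mp hpq
    subst this
    exact Nat.lt_succ_iff.mp (Finset.mem_range.mp hq1)
  · rintro ⟨hsq, hle⟩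
    have h1 : d = ∏ p ∈ d.primeFactors, p := (Nat.prod_primeFactors_of_squarefree hsq).symm
    rw [h1, primorial]
    apply Finset.prod_dvd_prod_of_subset
    intro p hp
    exact Finset.mem_filter.mpr ⟨Finset.mem_range.mpr (Nat.lt_succ_of_le (hle p hp)),
      Nat.prime_of_mem_primeFactors hp⟩

lemma sqfSet_eq (n : ℕ) : sqfSet n = (primorial n).divisors.erase 1 := by
  ext d
  simp only [sqfSet, Finset.mem_filter, Finset.mem_range, Finset.mem_erase,
    Nat.mem_divisors, Nat.lt_succ_iff]
  constructor
  · rintro ⟨-, h1, hsq, hle⟩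
    exact ⟨by omega, (dvd_primorial_iff (by omega)).mpr ⟨hsq, hle⟩, (primorial_pos n).ne'⟩
  · rintro ⟨h1, hdvd, -⟩
    have hd0 : d ≠ 0 := by
      rintro rfl
      exact (primorial_pos n).ne' (Nat.eq_zero_of_zero_dvd hdvd)
    obtain ⟨hsq, hle⟩ := (dvd_primorial_iff hd0).mp hdvd
    exact ⟨Nat.le_of_dvd (primorial_pos n) hdvd, by omega, hsq, hle⟩

/-- Legendre's sum. -/
def LS (x n : ℕ) : ℤ := ∑ d ∈ (primorial n).divisors, μ d * ((x / d : ℕ) : ℤ)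

lemma div_mod_split {d : ℕ} (hd : 0 < d) (M₁ M₂ : ℕ) :
    (M₁ + M₂) / d = M₁ / d + M₂ / d + (M₁ % d + M₂ % d) / d := by
  have h1 := Nat.div_add_mod M₁ d
  have h2 := Nat.div_add_mod M₂ d
  have : M₁ + M₂ = M₁ % d + M₂ % d + d * (M₁ / d + M₂ / d) := by
    rw [Nat.mul_add]; omega
  rw [this, Nat.add_mul_div_left _ _ hd]
  omega

lemma phiT_eq (M₁ M₂ n : ℕ) : phiT M₁ M₂ n = LS M₁ n + LS M₂ n - LS (M₁ + M₂) n := by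
  unfold phiT LS
  rw [sqfSet_eq]
  rw [Finset.sum_erase _ (by simp)]
  rw [← Finset.sum_add_distrib, ← Finset.sum_sub_distrib, ← Finset.sum_neg_distrib]
  refine Finset.sum_congr rfl fun d hd => ?_
  have hd0 : 0 < d := Nat.pos_of_mem_divisors hd
  have h := div_mod_split hd0 M₁ M₂
  have h' : (((M₁ + M₂) / d : ℕ) : ℤ)
      = (M₁ / d : ℕ) + (M₂ / d : ℕ) + ((M₁ % d + M₂ % d) / d : ℕ) := by
    exact_mod_cast congrArg (Nat.cast : ℕ → ℤ) h
  rw [h']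
  ring

lemma moebius_sum_divisors (k : ℕ) :
    ∑ d ∈ k.divisors, (μ d : ℤ) = if k = 1 then 1 else 0 := by
  rw [← coe_mul_zeta_apply, moebius_mul_coe_zeta, one_apply]

lemma LS_eq_card (x n : ℕ) :
    LS x n = (((Finset.Ioc 0 x).filter (fun m => Nat.Coprime m (primorial n))).card : ℤ) := by
  have hP : primorial n ≠ 0 := (primorial_pos n).ne'
  unfold LS
  calc ∑ d ∈ (primorial n).divisors, μ d * ((x / d : ℕ) : ℤ)
      = ∑ d ∈ (primorial n).divisors, ∑ m ∈ Finset.Ioc 0 x, if d ∣ m then (μ d : ℤ) else 0 := by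
        refine Finset.sum_congr rfl fun d _ => ?_
        rw [← Finset.sum_filter, Finset.sum_const, ← Nat.Ioc_filter_dvd_card_eq_div]
        ring
    _ = ∑ m ∈ Finset.Ioc 0 x, ∑ d ∈ (primorial n).divisors, if d ∣ m then (μ d : ℤ) else 0 :=
        Finset.sum_comm
    _ = ∑ m ∈ Finset.Ioc 0 x, ∑ d ∈ (Nat.gcd m (primorial n)).divisors, (μ d : ℤ) := by
        refine Finset.sum_congr rfl fun m hm => ?_
        rw [← Finset.sum_filter]
        congr 1
        ext e
        simp only [Finset.mem_filter, Nat.mem_divisors, Nat.dvd_gcd_iff]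
        constructor
        · rintro ⟨⟨h1, -⟩, h2⟩; exact ⟨⟨h2, h1⟩, Nat.gcd_ne_zero_right hP⟩
        · rintro ⟨⟨h1, h2⟩, -⟩; exact ⟨⟨h2, hP⟩, h1⟩
    _ = ∑ m ∈ Finset.Ioc 0 x, if Nat.gcd m (primorial n) = 1 then (1 : ℤ) else 0 :=
        Finset.sum_congr rfl fun m _ => moebius_sum_divisors _
    _ = (((Finset.Ioc 0 x).filter (fun m => Nat.Coprime m (primorial n))).card : ℤ) := by
        rw [Finset.card_filter]
        push_cast
        exact Finset.sum_congr rfl fun m _ => rfl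

lemma coprime_primorial_iff {m n : ℕ} :
    Nat.Coprime m (primorial n) ↔ ∀ p, p.Prime → p ≤ n → ¬ p ∣ m := by
  rw [primorial, Nat.coprime_prod_right_iff]
  constructor
  · intro h p hp hpn hpm
    have := h p (Finset.mem_filter.mpr ⟨Finset.mem_range.mpr (Nat.lt_succ_of_le hpn), hp⟩)
    rw [Nat.coprime_comm, hp.coprime_iff_not_dvd] at this
    exact this hpm
  · intro h q hq
    obtain ⟨hq1, hq2⟩ := Finset.mem_filter.mp hq
    rw [Nat.coprime_comm, hq2.coprime_iff_not_dvd]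
    exact h q hq2 (Nat.lt_succ_iff.mp (Finset.mem_range.mp hq1))

lemma filter_coprime_eq (x n : ℕ) (hn : 1 ≤ n) (hnx : n ≤ x) (hx : x < (n + 1) ^ 2) :
    (Finset.Ioc 0 x).filter (fun m => Nat.Coprime m (primorial n))
      = insert 1 ((Finset.Ioc n x).filter Nat.Prime) := by
  ext m
  simp only [Finset.mem_filter, Finset.mem_Ioc, Finset.mem_insert]
  constructor
  · rintro ⟨⟨hm0, hmx⟩, hcop⟩
    rw [coprime_primorial_iff] at hcop
    rcases eq_or_lt_of_le (Nat.succ_le_of_lt hm0) with h1 | h1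
    · exact Or.inl h1.symm
    · right
      have hmf : m.minFac.Prime := Nat.minFac_prime (by omega)
      have hmfn : n < m.minFac := by
        by_contra h
        exact hcop _ hmf (by omega) (Nat.minFac_dvd m)
      have hmp : m.Prime := by
        by_contra h
        have := Nat.minFac_sq_le_self (by omega) h
        have : (n+1)^2 ≤ m := le_trans (Nat.pow_le_pow_left hmfn 2) this
        omega
      refine ⟨⟨?_, hmx⟩, hmp⟩
      have : m.minFac = m := hmp.minFac_eq
      omega
  · rintro (rfl | ⟨⟨hnm, hmx⟩, hmp⟩)
    · exact ⟨⟨one_pos, by omega⟩, Nat.coprime_one_left _⟩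
    · refine ⟨⟨hmp.pos, hmx⟩, coprime_primorial_iff.mpr fun p hp hpn hpm => ?_⟩
      have := (Nat.prime_dvd_prime_iff_eq hp hmp).mp hpm
      omega

lemma pi_split (x n : ℕ) (h : n ≤ x) :
    Nat.primeCounting x = Nat.primeCounting n + ((Finset.Ioc n x).filter Nat.Prime).card := by
  rw [Nat.primeCounting, Nat.primeCounting, Nat.primeCounting', Nat.count_eq_card_filter_range,
    Nat.count_eq_card_filter_range]
  have hr : Finset.range (x + 1) = Finset.range (n + 1) ∪ Finset.Ico (n + 1) (x + 1) := by
    rw [Finset.range_eq_Ico, Finset.range_eq_Ico]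
    exact (Finset.Ico_union_Ico_eq_Ico (a := 0) (b := n + 1) (c := x + 1) (Nat.zero_le _) (by omega)).symm
  have hIoc : Finset.Ico (n + 1) (x + 1) = Finset.Ioc n x := by
    ext a; simp [Finset.mem_Ico, Finset.mem_Ioc]
  rw [hr, Finset.filter_union, Finset.card_union_of_disjoint, hIoc]
  exact Finset.disjoint_filter_filter (by
    rw [Finset.range_eq_Ico]
    exact Finset.Ico_disjoint_Ico_consecutive 0 (n+1) (x+1))

lemma LS_val (x n : ℕ) (hn : 1 ≤ n) (hnx : n ≤ x) (hx : x < (n + 1) ^ 2) :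
    LS x n = 1 + (Nat.primeCounting x : ℤ) - Nat.primeCounting n := by
  rw [LS_eq_card, filter_coprime_eq x n hn hnx hx]
  rw [Finset.card_insert_of_notMem (by simp [Finset.mem_filter, Finset.mem_Ioc]; omega)]
  have := pi_split x n hnx
  push_cast [this]
  ring

theorem stmt_3 (n : ℕ) (hn : 1 ≤ n) :
    (Nat.primeCounting ((n + 1) ^ 2) : ℤ) - Nat.primeCounting (n ^ 2) =
      (Nat.primeCounting (2 * n) : ℤ) - Nat.primeCounting n + 1 -
        phiT (n ^ 2) (2 * n) n := by
  have hsq : (n + 1) ^ 2 = n ^ 2 + 2 * n + 1 := by ring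
  have hn2 : n ≤ n ^ 2 := Nat.le_self_pow two_ne_zero n
  have h1 : LS (n ^ 2) n = 1 + (Nat.primeCounting (n ^ 2) : ℤ) - Nat.primeCounting n :=
    LS_val _ n hn hn2 (by nlinarith)
  have h2 : LS (2 * n) n = 1 + (Nat.primeCounting (2 * n) : ℤ) - Nat.primeCounting n :=
    LS_val _ n hn (by omega) (by nlinarith)
  have h3 : LS (n ^ 2 + 2 * n) n
      = 1 + (Nat.primeCounting (n ^ 2 + 2 * n) : ℤ) - Nat.primeCounting n :=
    LS_val _ n hn (by omega) (by nlinarith)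
  have hnp : ¬ Nat.Prime (n ^ 2 + 2 * n + 1) := by
    intro h
    rcases h.eq_one_or_self_of_dvd (n + 1) ⟨n + 1, by ring⟩ with h1' | h1'
    · omega
    · nlinarith
  have hpi : Nat.primeCounting ((n + 1) ^ 2) = Nat.primeCounting (n ^ 2 + 2 * n) := by
    rw [hsq, Nat.primeCounting, Nat.primeCounting, Nat.primeCounting', Nat.count_succ]
    simp [hnp]
  have := phiT_eq (n ^ 2) (2 * n) n
  rw [h1, h2, h3] at this
  have hpi' : (Nat.primeCounting ((n + 1) ^ 2) : ℤ) = Nat.primeCounting (n ^ 2 + 2 * n) := by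
    exact_mod_cast congrArg (Nat.cast : ℕ → ℤ) hpi
  linarith [this, hpi']
end

section
/- π(2n) - π(n) → ∞ as n → ∞, where π is the prime-counting function. -/
open Filter Asymptotics Real

lemma aux_sqrt_log_littleo : (fun y : ℝ => Real.sqrt y * Real.log y) =o[atTop] (id : ℝ → ℝ) := by
  have h : (fun y : ℝ => Real.sqrt y * Real.log y) =o[atTop]
      fun y : ℝ => Real.sqrt y * y ^ ((1:ℝ)/2) :=
    (isBigO_refl (fun y : ℝ => Real.sqrt y) atTop).mul_isLittleO
      (isLittleO_log_rpow_atTop (by norm_num))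
  refine h.trans_isBigO (Asymptotics.IsBigO.of_bound 1 ?_)
  filter_upwards [eventually_ge_atTop (0:ℝ)] with y hy
  rw [Real.sqrt_eq_rpow, ← Real.rpow_add' hy (by norm_num)]
  norm_num [abs_of_nonneg hy, Real.rpow_one]

lemma aux_log_two_mul_littleo : (fun x : ℝ => Real.log (2 * x)) =o[atTop] (id : ℝ → ℝ) := by
  have h := Real.isLittleO_log_id_atTop.comp_tendsto
    (tendsto_id.const_mul_atTop (by norm_num : (0:ℝ) < 2))
  refine h.trans_isBigO (Asymptotics.IsBigO.of_bound 2 ?_)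
  filter_upwards [eventually_ge_atTop (0:ℝ)] with y hy
  simp only [id, Function.comp, norm_eq_abs, abs_of_nonneg hy,
    abs_of_nonneg (by linarith : (0:ℝ) ≤ 2 * y)]
  linarith

lemma aux_main_littleo (k : ℕ) :
    (fun x : ℝ => Real.log x + Real.sqrt (2*x) * Real.log (2*x) + k * Real.log (2*x))
      =o[atTop] (id : ℝ → ℝ) := by
  refine (IsLittleO.add ?_ ?_).add ((aux_log_two_mul_littleo).const_mul_left k)
  · exact Real.isLittleO_log_id_atTop
  · have h := aux_sqrt_log_littleo.comp_tendsto
      (tendsto_id.const_mul_atTop (by norm_num : (0:ℝ) < 2))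
    refine h.trans_isBigO (Asymptotics.IsBigO.of_bound 2 ?_)
    filter_upwards [eventually_ge_atTop (0:ℝ)] with y hy
    simp only [id, Function.comp, norm_eq_abs, abs_of_nonneg hy,
      abs_of_nonneg (by linarith : (0:ℝ) ≤ 2 * y)]
    linarith

lemma aux_real_ineq (k : ℕ) :
    ∀ᶠ x : ℝ in atTop,
      x * ((2*x) ^ Real.sqrt (2*x) * (4:ℝ) ^ (2*x/3) * (2*x) ^ (k:ℝ)) ≤ (4:ℝ) ^ x := by
  have hlog4 : (0:ℝ) < Real.log 4 := Real.log_pos (by norm_num)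
  have hc := (aux_main_littleo k).def (div_pos hlog4 (by norm_num : (0:ℝ) < 3))
  filter_upwards [hc, eventually_ge_atTop (1:ℝ)] with x hx hx1
  have hx0 : 0 < x := by linarith
  have h2x : 0 < 2 * x := by linarith
  have key : Real.log x + Real.sqrt (2*x) * Real.log (2*x) + k * Real.log (2*x)
      ≤ Real.log 4 / 3 * x := by
    calc _ ≤ |Real.log x + Real.sqrt (2*x) * Real.log (2*x) + k * Real.log (2*x)| := le_abs_self _
    _ ≤ Real.log 4 / 3 * |x| := by simpa [Real.norm_eq_abs] using hx
    _ = Real.log 4 / 3 * x := by rw [abs_of_pos hx0]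
  rw [Real.rpow_def_of_pos h2x, Real.rpow_def_of_pos h2x,
    Real.rpow_def_of_pos (by norm_num : (0:ℝ) < 4),
    Real.rpow_def_of_pos (by norm_num : (0:ℝ) < 4)]
  nth_rewrite 1 [← Real.exp_log hx0]
  rw [← Real.exp_add, ← Real.exp_add, ← Real.exp_add, Real.exp_le_exp]
  nlinarith [key]

lemma aux_nat_ineq (k : ℕ) :
    ∀ᶠ n : ℕ in atTop,
      n * ((2*n) ^ Nat.sqrt (2*n) * 4 ^ (2*n/3) * (2*n) ^ k) ≤ 4 ^ n := by
  filter_upwards [(tendsto_natCast_atTop_atTop (R := ℝ)).eventually (aux_real_ineq k),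
    eventually_ge_atTop 1] with n h hn1
  rw [← @Nat.cast_le ℝ]
  push_cast
  rw [← Real.rpow_natCast 4 n]
  refine le_trans ?_ h
  have hn1' : (1:ℝ) ≤ (n:ℝ) := by exact_mod_cast hn1
  have h2n : (1:ℝ) ≤ 2 * n := by linarith
  have e1 : (2*(n:ℝ)) ^ (Nat.sqrt (2*n)) ≤ (2*(n:ℝ)) ^ Real.sqrt (2*(n:ℝ)) := by
    rw [← Real.rpow_natCast]
    refine Real.rpow_le_rpow_of_exponent_le h2n ?_
    have := Real.nat_sqrt_le_real_sqrt (a := 2*n)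
    push_cast at this ⊢
    exact this
  have e2 : (4:ℝ) ^ (2*n/3 : ℕ) ≤ (4:ℝ) ^ ((2*(n:ℝ))/3) := by
    rw [← Real.rpow_natCast]
    refine Real.rpow_le_rpow_of_exponent_le (by norm_num) ?_
    calc ((2*n/3 : ℕ) : ℝ) ≤ ((2*n : ℕ) : ℝ) / 3 := Nat.cast_div_le
    _ = 2*(n:ℝ)/3 := by push_cast; ring
  have e3 : (2*(n:ℝ)) ^ k ≤ (2*(n:ℝ)) ^ (k:ℝ) := by
    rw [← Real.rpow_natCast]
  refine mul_le_mul_of_nonneg_left ?_ (Nat.cast_nonneg n)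
  refine mul_le_mul (mul_le_mul e1 e2 (by positivity) (by positivity)) e3
    (by positivity) (by positivity)

lemma aux_count (n : ℕ) :
    Nat.primeCounting (2*n) - Nat.primeCounting n
      = ((Finset.Ico (n+1) (2*n+1)).filter (fun p => Nat.Prime p)).card := by
  have h1 : Nat.primeCounting (2*n) = ((2*n+1).primesBelow).card := by
    rw [Nat.primesBelow_card_eq_primeCounting', Nat.primeCounting]
  have h2 : Nat.primeCounting n = ((n+1).primesBelow).card := by
    rw [Nat.primesBelow_card_eq_primeCounting', Nat.primeCounting]
  rw [h1, h2, Nat.primesBelow, Nat.primesBelow]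
  have hsplit : Finset.range (n+1) ∪ Finset.Ico (n+1) (2*n+1) = Finset.range (2*n+1) := by
    rw [Finset.range_eq_Ico, Finset.range_eq_Ico]
    exact Finset.Ico_union_Ico_eq_Ico (Nat.zero_le _) (by omega)
  have hdisj : Disjoint (Finset.range (n+1)) (Finset.Ico (n+1) (2*n+1)) := by
    rw [Finset.range_eq_Ico]
    exact Finset.Ico_disjoint_Ico_consecutive 0 (n+1) (2*n+1)
  rw [← hsplit, Finset.filter_union,
    Finset.card_union_of_disjoint (Finset.disjoint_filter_filter hdisj)]
  omega

lemma aux_small (n : ℕ) (n_pos : 0 < n) :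
    ∏ p ∈ Finset.range (2*n/3+1), p ^ (Nat.centralBinom n).factorization p
      ≤ (2*n) ^ Nat.sqrt (2*n) * 4 ^ (2*n/3) := by
  have n2_pos : 1 ≤ 2 * n := by omega
  set S := (Finset.range (2 * n / 3 + 1)).filter Nat.Prime with hS
  set f : ℕ → ℕ := fun x => x ^ (Nat.centralBinom n).factorization x with hf
  have heq : ∏ x ∈ S, f x = ∏ x ∈ Finset.range (2 * n / 3 + 1), f x := by
    refine Finset.prod_filter_of_ne fun p _ h => ?_
    contrapose! h; dsimp only [f]
    rw [Nat.factorization_eq_zero_of_not_prime _ h, pow_zero]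
  rw [show (∏ p ∈ Finset.range (2*n/3+1), p ^ (Nat.centralBinom n).factorization p)
      = ∏ x ∈ Finset.range (2 * n / 3 + 1), f x from rfl, ← heq,
    ← Finset.prod_filter_mul_prod_filter_not S (· ≤ Nat.sqrt (2 * n))]
  apply Nat.mul_le_mul
  · refine (Finset.prod_le_prod' fun p _ => (?_ : f p ≤ 2 * n)).trans ?_
    · exact Nat.pow_factorization_choose_le (by omega)
    have hcard : (Finset.Icc 1 (Nat.sqrt (2 * n))).card = Nat.sqrt (2 * n) := by
      rw [Nat.card_Icc, Nat.add_sub_cancel]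
    rw [Finset.prod_const]
    refine pow_right_mono₀ n2_pos ((Finset.card_le_card fun x hx => ?_).trans hcard.le)
    obtain ⟨h1, h2⟩ := Finset.mem_filter.1 hx
    exact Finset.mem_Icc.mpr ⟨(Finset.mem_filter.1 h1).2.one_lt.le, h2⟩
  · refine le_trans ?_ (primorial_le_4_pow (2 * n / 3))
    refine (Finset.prod_le_prod' fun p hp => (?_ : f p ≤ p)).trans ?_
    · obtain ⟨h1, h2⟩ := Finset.mem_filter.1 hp
      refine (pow_right_mono₀ (Finset.mem_filter.1 h1).2.one_lt.le ?_).trans (pow_one p).le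
      exact Nat.factorization_choose_le_one (Nat.sqrt_lt'.mp <| not_le.1 h2)
    refine Finset.prod_le_prod_of_subset_of_one_le' (Finset.filter_subset _ _) ?_
    exact fun p hp _ => (Finset.mem_filter.1 hp).2.one_lt.le

lemma aux_large (n : ℕ) (hn : 2 < n) :
    ∏ p ∈ Finset.Ico (2*n/3+1) (2*n+1), p ^ (Nat.centralBinom n).factorization p
      ≤ (2*n) ^ ((Finset.Ico (n+1) (2*n+1)).filter (fun p => Nat.Prime p)).card := by
  set T := (Finset.Ico (2*n/3+1) (2*n+1)).filter (fun p => Nat.Prime p ∧ n < p) with hT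
  have heq : ∏ p ∈ T, p ^ (Nat.centralBinom n).factorization p
      = ∏ p ∈ Finset.Ico (2*n/3+1) (2*n+1), p ^ (Nat.centralBinom n).factorization p := by
    refine Finset.prod_filter_of_ne fun p hp h => ?_
    rw [Finset.mem_Ico] at hp
    by_cases hpp : Nat.Prime p
    · refine ⟨hpp, ?_⟩
      by_contra hple
      push_neg at hple
      rw [Nat.factorization_centralBinom_of_two_mul_self_lt_three_mul hn hple (by omega),
        pow_zero] at h
      exact absurd rfl h
    · rw [Nat.factorization_eq_zero_of_not_prime _ hpp, pow_zero] at h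
      exact absurd rfl h
  rw [← heq]
  calc ∏ p ∈ T, p ^ (Nat.centralBinom n).factorization p
      ≤ ∏ _p ∈ T, 2*n := by
        refine Finset.prod_le_prod' fun p hp => ?_
        obtain ⟨hmem, hpp, hnp⟩ := Finset.mem_filter.1 hp
        rw [Finset.mem_Ico] at hmem
        have hα : (Nat.centralBinom n).factorization p ≤ 1 :=
          Nat.factorization_choose_le_one (by nlinarith [hnp] : 2*n < p^2)
        calc p ^ (Nat.centralBinom n).factorization p ≤ p ^ 1 :=
              Nat.pow_le_pow_right hpp.pos hα
        _ = p := pow_one p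
        _ ≤ 2*n := by omega
    _ = (2*n) ^ T.card := Finset.prod_const (2*n)
    _ ≤ (2*n) ^ ((Finset.Ico (n+1) (2*n+1)).filter (fun p => Nat.Prime p)).card := by
        refine Nat.pow_le_pow_right (by omega) (Finset.card_le_card fun p hp => ?_)
        obtain ⟨hmem, hpp, hnp⟩ := Finset.mem_filter.1 hp
        rw [Finset.mem_Ico] at hmem
        exact Finset.mem_filter.2 ⟨Finset.mem_Ico.2 ⟨by omega, hmem.2⟩, hpp⟩

lemma aux_cb_le (n : ℕ) (hn : 2 < n) :
    Nat.centralBinom n ≤ (2*n) ^ Nat.sqrt (2*n) * 4 ^ (2*n/3)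
      * (2*n) ^ ((Finset.Ico (n+1) (2*n+1)).filter (fun p => Nat.Prime p)).card := by
  rw [← Nat.prod_pow_factorization_centralBinom n, Finset.range_eq_Ico,
    ← Finset.prod_Ico_consecutive _ (Nat.zero_le (2*n/3+1)) (by omega : 2*n/3+1 ≤ 2*n+1),
    ← Finset.range_eq_Ico]
  exact Nat.mul_le_mul (aux_small n (by omega)) (aux_large n hn)

theorem stmt_16 :
    Filter.Tendsto (fun n : ℕ => Nat.primeCounting (2 * n) - Nat.primeCounting n)
      Filter.atTop Filter.atTop := by
  rw [Filter.tendsto_atTop]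
  intro k
  filter_upwards [aux_nat_ineq k, eventually_ge_atTop 4] with n hineq hn4
  by_contra hlt
  push_neg at hlt
  rw [aux_count n] at hlt
  set t := ((Finset.Ico (n+1) (2*n+1)).filter (fun p => Nat.Prime p)).card with ht
  have h1 : 4 ^ n < n * Nat.centralBinom n := Nat.four_pow_lt_mul_centralBinom n hn4
  have h2 : Nat.centralBinom n ≤ (2*n) ^ Nat.sqrt (2*n) * 4 ^ (2*n/3) * (2*n) ^ t :=
    aux_cb_le n (by omega)
  have h3 : (2*n : ℕ) ^ t ≤ (2*n) ^ k := Nat.pow_le_pow_right (by omega) hlt.le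
  have : 4 ^ n < 4 ^ n := by
    calc 4 ^ n < n * Nat.centralBinom n := h1
    _ ≤ n * ((2*n) ^ Nat.sqrt (2*n) * 4 ^ (2*n/3) * (2*n) ^ t) := Nat.mul_le_mul_left n h2
    _ ≤ n * ((2*n) ^ Nat.sqrt (2*n) * 4 ^ (2*n/3) * (2*n) ^ k) :=
        Nat.mul_le_mul_left n (Nat.mul_le_mul_left _ h3)
    _ ≤ 4 ^ n := hineq
  exact lt_irrefl _ this
end
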